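/- Let W be a von Neumann algebra, A ⊆ B ⊆ W unital subalgebras, and suppose B admits a Lebesgue decomposition with Lebesgue projection 𝔷_B ∈ B**. If 𝔷_B lies in A^⊥⊥ (identified with A** inside B**), then A admits a Lebesgue decomposition compatible with that of B; conversely, if A admits a Lebesgue decomposition compatible with that of B, then 𝔷_B ∈ A^⊥⊥. -/

import Mathlib

open NormedSpace ContinuousLinearMap Filter Topology

/-- `dmulL A φ a` is the functional `φa` with `(φa)(b) = φ(ab)`. -/
noncomputable def dmulL (A : Type*) [NormedRing A] [NormedAlgebra ℂ A] :
    StrongDual ℂ A →L[ℂ] A →L[ℂ] StrongDual ℂ A :=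
  ((compL ℂ A (A →L[ℂ] A) (StrongDual ℂ A)).flip (mul ℂ A)).comp (compL ℂ A A ℂ)

/-- `dmulL' A φ a` is the functional `aφ` with `(aφ)(b) = φ(ba)`. -/
noncomputable def dmulL' (A : Type*) [NormedRing A] [NormedAlgebra ℂ A] :
    StrongDual ℂ A →L[ℂ] A →L[ℂ] StrongDual ℂ A :=
  ((compL ℂ A (A →L[ℂ] A) (StrongDual ℂ A)).flip ((mul ℂ A).flip)).comp (compL ℂ A A ℂ)

/-- Left module action of the bidual on the dual: `(biSMulL Λ φ)(a) = Λ(φa)`. -/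
noncomputable def biSMulL {A : Type*} [NormedRing A] [NormedAlgebra ℂ A]
    (Λ : StrongDual ℂ (StrongDual ℂ A)) : StrongDual ℂ A →L[ℂ] StrongDual ℂ A :=
  (compL ℂ A (StrongDual ℂ A) ℂ Λ).comp (dmulL A)

/-- Right module action of the bidual on the dual: `(biSMulR φ Λ)(a) = Λ(aφ)`. -/
noncomputable def biSMulR {A : Type*} [NormedRing A] [NormedAlgebra ℂ A]
    (φ : StrongDual ℂ A) (Λ : StrongDual ℂ (StrongDual ℂ A)) : StrongDual ℂ A :=
  Λ.comp (dmulL' A φ)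

/-- The Arens product on the bidual: `(arens Λ Ξ)(φ) = Λ(Ξ·φ)`. -/
noncomputable def arens {A : Type*} [NormedRing A] [NormedAlgebra ℂ A]
    (Λ Ξ : StrongDual ℂ (StrongDual ℂ A)) : StrongDual ℂ (StrongDual ℂ A) :=
  Λ.comp (biSMulL Ξ)

/-- The canonical image of the unit of `A` in the bidual `A**`. -/
noncomputable def biOne (A : Type*) [NormedRing A] [NormedAlgebra ℂ A] :
    StrongDual ℂ (StrongDual ℂ A) :=
  NormedSpace.inclusionInDoubleDual ℂ A 1

/-- Weak-* continuity of a functional on a von Neumann algebra `W`, relative to the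
identification `e` of `W` with the dual of its predual `V`. -/
def WStarContRel {W : Type*} [NormedRing W] [NormedAlgebra ℂ W]
    {V : Type*} [NormedAddCommGroup V] [NormedSpace ℂ V]
    (e : W ≃ₗᵢ[ℂ] StrongDual ℂ V) (Φ : W → ℂ) : Prop :=
  Continuous fun v : WeakDual ℂ V => Φ (e.symm (WeakDual.toStrongDual v))

/-- The absolutely continuous functionals on a unital subalgebra `S` of the von Neumann
algebra `W`: those extending to weak-* continuous linear functionals on `W`. -/
def ACsub {W : Type*} [NormedRing W] [NormedAlgebra ℂ W]
    {V : Type*} [NormedAddCommGroup V] [NormedSpace ℂ V]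
    (e : W ≃ₗᵢ[ℂ] StrongDual ℂ V) (S : Subalgebra ℂ W) : Set (StrongDual ℂ ↥S) :=
  {φ | ∃ Φ : W →ₗ[ℂ] ℂ, WStarContRel e Φ ∧ ∀ a : ↥S, Φ (a : W) = φ a}

/-- The continuous inclusion between nested unital subalgebras. -/
noncomputable def subIncl {W : Type*} [NormedRing W] [NormedAlgebra ℂ W]
    {A B : Subalgebra ℂ W} (h : A ≤ B) : ↥A →L[ℂ] ↥B :=
  LinearMap.mkContinuous (Subalgebra.inclusion h).toLinearMap 1 (fun x => by
    rw [one_mul]; exact le_of_eq rfl)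

section Aux

variable {W : Type*} [NormedRing W] [NormedAlgebra ℂ W]

lemma biSMulL_biSMulL (Λ Ξ : StrongDual ℂ (StrongDual ℂ W)) (φ : StrongDual ℂ W) :
    biSMulL Λ (biSMulL Ξ φ) = biSMulL (arens Λ Ξ) φ := by
  ext a
  show Λ (dmulL W (biSMulL Ξ φ) a) = Λ (biSMulL Ξ (dmulL W φ a))
  congr 1
  ext b
  show Ξ (dmulL W φ (a * b)) = Ξ (dmulL W (dmulL W φ a) b)
  congr 1
  ext c
  show φ (a * b * c) = φ (a * (b * c))
  rw [mul_assoc]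

/-- The inclusion of a subalgebra into the ambient algebra, as a CLM. -/
noncomputable def inclW (B : Subalgebra ℂ W) : ↥B →L[ℂ] W :=
  LinearMap.mkContinuous (Subalgebra.val B).toLinearMap 1 (fun x => by
    rw [one_mul]; exact le_of_eq rfl)

variable {A B : Subalgebra ℂ W} (h : A ≤ B)

lemma subIncl_norm_le : ‖subIncl h‖ ≤ 1 :=
  LinearMap.mkContinuous_norm_le _ zero_le_one _

lemma res_norm_le (χ : StrongDual ℂ ↥B) : ‖χ.comp (subIncl h)‖ ≤ ‖χ‖ := by
  calc ‖χ.comp (subIncl h)‖ ≤ ‖χ‖ * ‖subIncl h‖ := opNorm_comp_le _ _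
  _ ≤ ‖χ‖ * 1 := mul_le_mul_of_nonneg_left (subIncl_norm_le h) (norm_nonneg χ)
  _ = ‖χ‖ := mul_one _

lemma dmulL_res (ψ : StrongDual ℂ ↥B) (a : ↥A) :
    dmulL ↥A (ψ.comp (subIncl h)) a = (dmulL ↥B ψ (subIncl h a)).comp (subIncl h) := by
  ext b
  exact congrArg ψ (Subtype.ext rfl)

/-- Hahn–Banach extension from `A` to `B`. -/
lemma exists_ext (φ : StrongDual ℂ ↥A) :
    ∃ ψ : StrongDual ℂ ↥B, ψ.comp (subIncl h) = φ ∧ ‖ψ‖ ≤ ‖φ‖ := by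
  -- view `A` as a submodule of `W`
  set p : Submodule ℂ W := Subalgebra.toSubmodule A with hp
  let j : ↥p →L[ℂ] ↥A := LinearMap.mkContinuous
    { toFun := fun x => (⟨x.1, x.2⟩ : ↥A)
      map_add' := fun x y => Subtype.ext rfl
      map_smul' := fun c x => Subtype.ext rfl } 1 (fun x => by
        rw [one_mul]; exact le_of_eq rfl)
  obtain ⟨g, hg, hgn⟩ := exists_extension_norm_eq p (φ.comp j)
  refine ⟨g.comp (inclW B), ?_, ?_⟩
  · refine ContinuousLinearMap.ext fun a => ?_
    exact hg ⟨(a : W), a.2⟩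
  · calc ‖g.comp (inclW B)‖ ≤ ‖g‖ * ‖inclW B‖ := opNorm_comp_le _ _
    _ ≤ ‖g‖ * 1 := mul_le_mul_of_nonneg_left
        (LinearMap.mkContinuous_norm_le _ zero_le_one _) (norm_nonneg _)
    _ = ‖φ.comp j‖ := by rw [mul_one, hgn]
    _ ≤ ‖φ‖ * ‖j‖ := opNorm_comp_le _ _
    _ ≤ ‖φ‖ * 1 := mul_le_mul_of_nonneg_left
        (LinearMap.mkContinuous_norm_le _ zero_le_one _) (norm_nonneg φ)
    _ = ‖φ‖ := mul_one _

end Aux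

set_option maxHeartbeats 2000000 in
/-- given `A ⊆ B ⊆ W` unital subalgebras with `B` admitting a Lebesgue
decomposition with Lebesgue projection `z_B ∈ B**`, the algebra `A` admits a Lebesgue
decomposition compatible with that of `B` iff `z_B` lies in `A^⊥⊥ ⊆ B**`. -/
theorem stmt7 {W : Type*} [NormedRing W] [StarRing W] [CStarRing W]
    [NormedAlgebra ℂ W] [StarModule ℂ W] [CompleteSpace W]
    {V : Type*} [NormedAddCommGroup V] [NormedSpace ℂ V] (e : W ≃ₗᵢ[ℂ] StrongDual ℂ V)
    {A B : Subalgebra ℂ W} (hAB : A ≤ B)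
    (zB : StrongDual ℂ (StrongDual ℂ ↥B))
    -- `z_B` is the Lebesgue projection of `B`: a central projection implementing
    -- the Lebesgue decomposition of `B*`
    (hidem : arens zB zB = zB)
    (hcentral : ∀ Ξ : StrongDual ℂ (StrongDual ℂ ↥B), arens zB Ξ = arens Ξ zB)
    (hrange : ACsub e B = Set.range (biSMulL zB))
    (hnorm : ∀ ψ : StrongDual ℂ ↥B, ‖ψ‖ = ‖biSMulL zB ψ‖ + ‖ψ - biSMulL zB ψ‖) :
    -- `z_B ∈ A^⊥⊥`
    ((∀ ψ : StrongDual ℂ ↥B, (∀ a : ↥A, ψ (subIncl hAB a) = 0) → zB ψ = 0) ↔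
      -- `A` admits a Lebesgue decomposition compatible with that of `B`
      ∃ LA : StrongDual ℂ ↥A →L[ℂ] StrongDual ℂ ↥A,
        (∀ φ, LA (LA φ) = LA φ) ∧
        Set.range LA = ACsub e A ∧
        (∀ φ : StrongDual ℂ ↥A, ‖φ‖ = ‖LA φ‖ + ‖φ - LA φ‖) ∧
        ∀ ψ : StrongDual ℂ ↥B,
          LA (ψ.comp (subIncl hAB)) = (biSMulL zB ψ).comp (subIncl hAB) ∧
          ψ.comp (subIncl hAB) - LA (ψ.comp (subIncl hAB))
            = (ψ - biSMulL zB ψ).comp (subIncl hAB)) := by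
  constructor
  · intro h
    -- well-definedness of `z_B` on restrictions
    have welldef : ∀ ψ ψ' : StrongDual ℂ ↥B,
        ψ.comp (subIncl hAB) = ψ'.comp (subIncl hAB) → zB ψ = zB ψ' := by
      intro ψ ψ' hψ
      have h0 : zB (ψ - ψ') = 0 := by
        refine h _ fun a => ?_
        have := congrArg (fun χ => χ a) hψ
        simpa [sub_eq_zero] using this
      have h5 : zB ψ - zB ψ' = 0 := by rw [← map_sub]; exact h0
      exact sub_eq_zero.mp h5
    choose E hE1 hE2 using fun φ : StrongDual ℂ ↥A => exists_ext hAB φ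
    have hzA : ∃ zA : StrongDual ℂ (StrongDual ℂ ↥A), ∀ χ, zA χ = zB (E χ) :=
      letI : NormedSpace ℂ ↥B := inferInstance
      ⟨LinearMap.mkContinuous
      { toFun := fun φ => zB (E φ)
        map_add' := fun φ φ' => by
          have h6 : zB (E (φ + φ')) = zB (E φ + E φ') := by
            refine welldef _ _ ?_
            rw [ContinuousLinearMap.add_comp, hE1, hE1, hE1]
          show zB (E (φ + φ')) = zB (E φ) + zB (E φ')
          rw [h6, map_add]
        map_smul' := fun c φ => by
          have h6 : zB (E (c • φ)) = zB (c • E φ) := by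
            refine welldef _ _ ?_
            rw [ContinuousLinearMap.smul_comp, hE1, hE1]
          show zB (E (c • φ)) = c • zB (E φ)
          rw [h6, map_smul] }
      ‖zB‖ (fun φ => by
        calc ‖zB (E φ)‖ ≤ ‖zB‖ * ‖E φ‖ := le_opNorm _ _
        _ ≤ ‖zB‖ * ‖φ‖ := mul_le_mul_of_nonneg_left (hE2 φ) (norm_nonneg zB)),
        fun χ => rfl⟩
    obtain ⟨zA, zA_apply⟩ := hzA
    have zAres : ∀ ψ : StrongDual ℂ ↥B, zA (ψ.comp (subIncl hAB)) = zB ψ := by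
      intro ψ
      rw [zA_apply]
      exact welldef _ _ (hE1 _)
    have KI : ∀ ψ : StrongDual ℂ ↥B,
        biSMulL zA (ψ.comp (subIncl hAB)) = (biSMulL zB ψ).comp (subIncl hAB) := by
      intro ψ
      refine ContinuousLinearMap.ext fun a => ?_
      show zA (dmulL ↥A (ψ.comp (subIncl hAB)) a) = (biSMulL zB ψ) (subIncl hAB a)
      rw [dmulL_res hAB ψ a, zAres]
      rfl
    refine ⟨biSMulL zA, ?_, ?_, ?_,
      fun ψ => ⟨KI ψ, by rw [KI ψ, ContinuousLinearMap.sub_comp]⟩⟩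
    · intro φ
      have hres : φ = (E φ).comp (subIncl hAB) := (hE1 φ).symm
      have e1 : biSMulL zA φ = (biSMulL zB (E φ)).comp (subIncl hAB) := by
        conv_lhs => rw [hres]
        exact KI (E φ)
      rw [e1, KI, biSMulL_biSMulL, hidem, ← e1]
    · apply Set.eq_of_subset_of_subset
      · rintro x ⟨φ, rfl⟩
        have e1 : biSMulL zA φ = (biSMulL zB (E φ)).comp (subIncl hAB) := by
          conv_lhs => rw [(hE1 φ).symm]
          exact KI (E φ)
        rw [e1]
        have hmem : biSMulL zB (E φ) ∈ ACsub e B := by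
          rw [hrange]; exact ⟨E φ, rfl⟩
        obtain ⟨Φ, hΦw, hΦ⟩ := hmem
        exact ⟨Φ, hΦw, fun a => hΦ (subIncl hAB a)⟩
      · rintro φ ⟨Φ, hΦw, hΦ⟩
        have hc : Continuous Φ := by
          have hc1 : Continuous fun v : WeakDual ℂ V =>
              Φ (e.symm (WeakDual.toStrongDual v)) := hΦw
          have hc2 : Continuous fun w : W => StrongDual.toWeakDual (e w) :=
            NormedSpace.Dual.toWeakDual_continuous.comp e.continuous
          have h3 := hc1.comp hc2
          have h4 : ((fun v : WeakDual ℂ V => Φ (e.symm (WeakDual.toStrongDual v)))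
              ∘ fun w : W => StrongDual.toWeakDual (e w)) = ⇑Φ := by
            funext w
            exact congrArg Φ (e.symm_apply_apply w)
          rwa [h4] at h3
        let ψ₀ : StrongDual ℂ ↥B := (⟨Φ, hc⟩ : W →L[ℂ] ℂ).comp (inclW B)
        have hmem : ψ₀ ∈ ACsub e B := ⟨Φ, hΦw, fun b => rfl⟩
        rw [hrange] at hmem
        obtain ⟨ψ₁, hψ₁⟩ := hmem
        refine ⟨ψ₁.comp (subIncl hAB), ?_⟩
        rw [KI, hψ₁]
        exact ContinuousLinearMap.ext fun a => hΦ a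
    · intro φ
      refine le_antisymm ?_ ?_
      · calc ‖φ‖ = ‖biSMulL zA φ + (φ - biSMulL zA φ)‖ := by rw [add_sub_cancel]
        _ ≤ _ := norm_add_le _ _
      · have hres : φ = (E φ).comp (subIncl hAB) := (hE1 φ).symm
        have e1 : biSMulL zA φ = (biSMulL zB (E φ)).comp (subIncl hAB) := by
          conv_lhs => rw [hres]
          exact KI (E φ)
        have e2 : φ - biSMulL zA φ
            = ((E φ) - biSMulL zB (E φ)).comp (subIncl hAB) := by
          rw [e1, ContinuousLinearMap.sub_comp, hE1]
        calc ‖biSMulL zA φ‖ + ‖φ - biSMulL zA φ‖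
            = ‖(biSMulL zB (E φ)).comp (subIncl hAB)‖
              + ‖((E φ) - biSMulL zB (E φ)).comp (subIncl hAB)‖ := by rw [e2, e1]
        _ ≤ ‖biSMulL zB (E φ)‖ + ‖E φ - biSMulL zB (E φ)‖ :=
            add_le_add (res_norm_le hAB _) (res_norm_le hAB _)
        _ = ‖E φ‖ := (hnorm (E φ)).symm
        _ ≤ ‖φ‖ := hE2 φ
  · rintro ⟨LA, hid, hrg, hnrm, hcomp⟩ ψ hψ
    have h0 : ψ.comp (subIncl hAB) = 0 := ContinuousLinearMap.ext hψ
    have h1 := (hcomp ψ).1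
    rw [h0, map_zero] at h1
    have h2 : biSMulL zB ψ (subIncl hAB (1 : ↥A)) = 0 := by
      have h2' := congrArg (fun χ : StrongDual ℂ ↥A => χ 1) h1
      simpa using h2'.symm
    have h3 : subIncl hAB (1 : ↥A) = (1 : ↥B) := Subtype.ext rfl
    rw [h3] at h2
    have h4 : dmulL ↥B ψ 1 = ψ := by
      ext b; show ψ (1 * b) = ψ b; rw [one_mul]
    calc zB ψ = zB (dmulL ↥B ψ 1) := by rw [h4]
    _ = biSMulL zB ψ 1 := rfl
    _ = 0 := h2
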